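/- Let λ, r₀, r₂ be positive real numbers, let u : ℝ → ℝ be twice differentiable with v := u' satisfying v'(t) ≥ (λ/r₀²)·v(t)² − r₀·r₂ for all t ∈ ℝ. If there exists t₀ ∈ ℝ with v(t₀) > √(r₀³·r₂/λ), then v is nondecreasing on [t₀, ∞), v'(t) ≥ (λ/r₀²)·v(t₀)² − r₀·r₂ > 0 for all t ≥ t₀, and consequently u(t) → +∞ as t → +∞. -/
import Mathlib


open Filter

/-- Forward blow-up: if `v = u'` satisfies the Riccati differential inequality and
`v(t₀) > √(r₀³r₂/λ)`, then `v` is nondecreasing on `[t₀, ∞)`, with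
`v'(t) ≥ (λ/r₀²)·v(t₀)² − r₀·r₂ > 0` there, and `u(t) → +∞` as `t → +∞`. -/
theorem landau_hadamard_forward_blowup (lam r₀ r₂ : ℝ)
    (hlam : 0 < lam) (hr₀ : 0 < r₀) (hr₂ : 0 < r₂)
    (u : ℝ → ℝ) (hu : Differentiable ℝ u) (hu' : Differentiable ℝ (deriv u))
    (v : ℝ → ℝ) (hv : v = deriv u)
    (hineq : ∀ t : ℝ, (lam / r₀ ^ 2) * (v t) ^ 2 - r₀ * r₂ ≤ deriv v t)
    (t₀ : ℝ) (ht₀ : Real.sqrt (r₀ ^ 3 * r₂ / lam) < v t₀) :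
    MonotoneOn v (Set.Ici t₀) ∧
      (∀ t ≥ t₀, (lam / r₀ ^ 2) * (v t₀) ^ 2 - r₀ * r₂ ≤ deriv v t) ∧
      0 < (lam / r₀ ^ 2) * (v t₀) ^ 2 - r₀ * r₂ ∧
      Tendsto u atTop atTop := by
  set c : ℝ := Real.sqrt (r₀ ^ 3 * r₂ / lam) with hc
  have hc0 : 0 ≤ c := Real.sqrt_nonneg _
  have hvdiff : Differentiable ℝ v := hv ▸ hu'
  have hvcont : Continuous v := hvdiff.continuous
  -- key algebraic fact
  have sq_gt : ∀ m : ℝ, c < m → 0 < lam / r₀ ^ 2 * m ^ 2 - r₀ * r₂ := by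
    intro m hm
    have h1 : r₀ ^ 3 * r₂ / lam < m ^ 2 := by
      have := Real.lt_sq_of_sqrt_lt hm
      simpa [sq] using this
    have h2 : r₀ ^ 3 * r₂ < m ^ 2 * lam := (div_lt_iff₀ hlam).mp h1
    have hr2 : (0:ℝ) < r₀ ^ 2 := pow_pos hr₀ 2
    rw [div_mul_eq_mul_div, sub_pos, lt_div_iff₀ hr2]
    nlinarith
  -- main invariance claim
  have main : ∀ a : ℝ, c < v a → ∀ b : ℝ, a ≤ b → v a ≤ v b := by
    intro a ha b hab
    by_contra hlt
    push_neg at hlt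
    set m : ℝ := (max c (v b) + v a) / 2 with hm
    have hmax : max c (v b) < v a := max_lt ha hlt
    have hm1 : c < m := by
      have := le_max_left c (v b); simp only [hm]; linarith
    have hm2 : v b < m := by
      have := le_max_right c (v b); simp only [hm]; linarith
    have hm3 : m < v a := by simp only [hm]; linarith
    set S : Set ℝ := Set.Icc a b ∩ v ⁻¹' Set.Iic m with hS
    have hSne : S.Nonempty := ⟨b, ⟨hab, le_rfl⟩, hm2.le⟩
    have hSbdd : BddBelow S := ⟨a, fun t ht => ht.1.1⟩
    have hSclosed : IsClosed S :=
      (isClosed_Icc).inter (isClosed_Iic.preimage hvcont)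
    set s : ℝ := sInf S with hs
    have hsS : s ∈ S := hSclosed.csInf_mem hSne hSbdd
    have has : a ≤ s := hsS.1.1
    have hsb : s ≤ b := hsS.1.2
    have haS : a ∉ S := fun h => absurd h.2 (not_le.mpr hm3)
    have halt : a < s := lt_of_le_of_ne has (fun h => haS (h ▸ hsS))
    -- on (a, s), v t > m
    have hgt : ∀ t ∈ Set.Ioo a s, m < v t := by
      intro t ht
      by_contra h
      push_neg at h
      have : t ∈ S := ⟨⟨ht.1.le, ht.2.le.trans hsb⟩, h⟩
      exact absurd (csInf_le hSbdd this) (not_le.mpr ht.2)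
    -- v strictly increasing on [a, s]
    have hmono : StrictMonoOn v (Set.Icc a s) := by
      apply strictMonoOn_of_deriv_pos (convex_Icc a s) (hvcont.continuousOn)
      intro t ht
      rw [interior_Icc] at ht
      have hvt : c < v t := hm1.trans (hgt t ht)
      exact lt_of_lt_of_le (sq_gt (v t) hvt) (hineq t)
    have : v a < v s := hmono ⟨le_rfl, has⟩ ⟨has, le_rfl⟩ halt
    have : v a < m := this.trans_le hsS.2
    linarith
  -- monotonicity
  have hmonov : MonotoneOn v (Set.Ici t₀) := by
    intro a ha b hb hab
    have hva : c < v a := ht₀.trans_le (main t₀ ht₀ a ha)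
    exact main a hva b hab
  have hvt₀pos : 0 < v t₀ := lt_of_le_of_lt hc0 ht₀
  have hderiv_ge : ∀ t ≥ t₀, (lam / r₀ ^ 2) * (v t₀) ^ 2 - r₀ * r₂ ≤ deriv v t := by
    intro t ht
    have h1 : v t₀ ≤ v t := main t₀ ht₀ t ht
    have h2 : (v t₀) ^ 2 ≤ (v t) ^ 2 := by nlinarith
    have h3 : (0:ℝ) ≤ lam / r₀ ^ 2 := le_of_lt (div_pos hlam (pow_pos hr₀ 2))
    have := hineq t
    nlinarith
  refine ⟨hmonov, hderiv_ge, sq_gt (v t₀) ht₀, ?_⟩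
  -- u → +∞
  set g : ℝ → ℝ := fun t => u t - v t₀ * t with hg
  have hgdiff : Differentiable ℝ g := hu.sub (differentiable_id.const_mul _)
  have hgderiv : ∀ t, deriv g t = v t - v t₀ := by
    intro t
    have h1 : HasDerivAt g (deriv u t - v t₀ * 1) t :=
      ((hu t).hasDerivAt).sub ((hasDerivAt_id t).const_mul (v t₀))
    rw [h1.deriv, hv, mul_one]
  have hgmono : MonotoneOn g (Set.Ici t₀) := by
    apply monotoneOn_of_deriv_nonneg (convex_Ici t₀) hgdiff.continuous.continuousOn
      (fun t _ => (hgdiff t).differentiableWithinAt)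
    intro t ht
    rw [interior_Ici] at ht
    rw [hgderiv]
    have := main t₀ ht₀ t ht.le
    linarith
  have hbound : ∀ t ≥ t₀, g t₀ + v t₀ * t ≤ u t := by
    intro t ht
    have := hgmono (Set.self_mem_Ici) ht ht
    simp only [hg] at this ⊢
    linarith
  have htend : Tendsto (fun t : ℝ => g t₀ + v t₀ * t) atTop atTop :=
    tendsto_atTop_add_const_left _ _ (Tendsto.const_mul_atTop hvt₀pos tendsto_id)
  exact tendsto_atTop_mono' atTop
    (eventually_atTop.mpr ⟨t₀, fun t ht => hbound t ht⟩) htend
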